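/- Let R = K[x], T = K^b(proj R), and P_n the complex R --x^n--> R in degrees -1, 0. Consider the octahedron on f = g = x^1_{3,3}: P_3 → P_3 with D = F = P_1[1] ⊕ P_1, E = P_2[1] ⊕ P_2, f' = g' = (y^3_{3,1}, x^0_{3,1})^T, h' = (y^3_{3,2}, x^0_{3,2})^T, g'' = f'' = (-x^2_{1,3}[1], y^1_{1,3}), h'' = (-x^1_{2,3}[1], y^2_{2,3}), k = diag(x^1_{1,2}[1], x^1_{1,2}), k' = diag(x^0_{2,1}[1], x^0_{2,1}), and the modified octahedron with the same data except k~ = (x^1_{1,2}[1], y^1_{1,2}; 0, x^1_{1,2}) and k~' = (x^0_{2,1}[1], -y^2_{2,1}; 0, x^0_{2,1}). Then there is no isomorphism of octahedra between these two octahedra (i.e., no family of isomorphisms φ_X: X → X for X ∈ {A, B, C, D, E, F} commuting with all morphisms of both octahedra). -/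

import Mathlib

/- Setup: `R = K[x]`, the two-term cochain complexes `P n = (R --x^n--> R)` in degrees
`-1, 0`, and the morphisms `x^i_{m,n}` and `y^i_{m,n}` in the bounded homotopy category
`K^b(proj R)` (realized inside the homotopy category of cochain complexes of
`R`-modules). -/

noncomputable section
open CategoryTheory CategoryTheory.Limits Polynomial ZeroObject CategoryTheory.Pretriangulated

variable (K : Type) [Field K]

abbrev RMod := ModuleCat.of (Polynomial K) (Polynomial K)

/-- Multiplication by `x^a` on `R = K[x]`. -/
def mulX (a : ℕ) : RMod K ⟶ RMod K :=
  ModuleCat.ofHom (LinearMap.mulLeft (Polynomial K) ((X : Polynomial K) ^ a))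

lemma mulX_comp (a b : ℕ) : mulX K a ≫ mulX K b = mulX K (a + b) := by
  dsimp [mulX]
  rw [show ((X : Polynomial K) ^ (a + b)) = X ^ b * X ^ a by
        rw [← pow_add, add_comm],
      LinearMap.mulLeft_mul]
  rfl

/-- The graded pieces of the two-term complexes `P n`. -/
def Pobj : ℤ → ModuleCat (Polynomial K) := fun i =>
  if i = -1 ∨ i = 0 then RMod K else ModuleCat.of (Polynomial K) PUnit

lemma PobjNeg : Pobj K (-1) = RMod K := by simp [Pobj]
lemma PobjZero : Pobj K 0 = RMod K := by simp [Pobj]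

/-- The differential of `P n`. -/
def Pd (n : ℕ) : ∀ i : ℤ, Pobj K i ⟶ Pobj K (i + 1) := fun i =>
  if h : i = -1 then
    eqToHom (by rw [h, PobjNeg]) ≫ mulX K n ≫ eqToHom (by rw [h]; norm_num [PobjZero])
  else 0

/-- The two-term complex `P n = (R --x^n--> R)` in degrees `-1, 0`. -/
def P (n : ℕ) : CochainComplex (ModuleCat (Polynomial K)) ℤ :=
  CochainComplex.of (Pobj K) (Pd K n) (fun i => by
    by_cases h : i = -1
    · have h2 : Pd K n (i + 1) = 0 := dif_neg (by omega)
      rw [h2, Limits.comp_zero]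
    · have h1 : Pd K n i = 0 := dif_neg h
      rw [h1, Limits.zero_comp])

lemma P_d_eq_zero (n : ℕ) (i j : ℤ) (hi : i ≠ -1) : (P K n).d i j = 0 := by
  by_cases h : i + 1 = j
  · subst h
    show CochainComplex.of.d (Pobj K) (Pd K n) i (i + 1) = 0
    rw [CochainComplex.of_d]
    exact dif_neg hi
  · exact HomologicalComplex.shape _ _ _ (by simpa using h)

/-- The components of the chain map which is multiplication by `x^a` in degree `-1`
and by `x^b` in degree `0`. -/
def xComp (a b : ℕ) : ∀ i : ℤ, Pobj K i ⟶ Pobj K i := fun i =>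
  if h : i = -1 then eqToHom (by rw [h, PobjNeg]) ≫ mulX K a ≫ eqToHom (by rw [h, PobjNeg])
  else if h0 : i = 0 then
    eqToHom (by rw [h0, PobjZero]) ≫ mulX K b ≫ eqToHom (by rw [h0, PobjZero])
  else 0

/-- The chain map `P m ⟶ P n` which is multiplication by `x^a` in degree `-1` and by
`x^b` in degree `0`; it commutes with the differentials since `a + n = b + m`. -/
def xMap (m n a b : ℕ) (hab : a + n = b + m) : P K m ⟶ P K n :=
  CochainComplex.ofHom (xComp K a b) (by
    intro i
    show xComp K a b i ≫ CochainComplex.of.d (Pobj K) (Pd K n) i (i + 1) =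
      CochainComplex.of.d (Pobj K) (Pd K m) i (i + 1) ≫ xComp K a b (i + 1)
    rw [CochainComplex.of_d, CochainComplex.of_d]
    by_cases hi : i = -1
    · subst hi
      show xComp K a b (-1) ≫ Pd K n (-1) = Pd K m (-1) ≫ xComp K a b (-1 + 1)
      rw [show xComp K a b (-1 + 1) = xComp K a b 0 from rfl]
      rw [show xComp K a b (-1) = eqToHom (PobjNeg K) ≫ mulX K a ≫ eqToHom (PobjNeg K).symm
          from dif_pos rfl]
      rw [show xComp K a b 0 = eqToHom (PobjZero K) ≫ mulX K b ≫ eqToHom (PobjZero K).symm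
          from by rw [xComp, dif_neg (by norm_num), dif_pos rfl]]
      rw [show Pd K n (-1) = eqToHom (PobjNeg K) ≫ mulX K n ≫
            eqToHom (by norm_num [PobjZero] : RMod K = Pobj K (-1 + 1))
          from dif_pos rfl]
      rw [show Pd K m (-1) = eqToHom (PobjNeg K) ≫ mulX K m ≫
            eqToHom (by norm_num [PobjZero] : RMod K = Pobj K (-1 + 1))
          from dif_pos rfl]
      simp only [Category.assoc, eqToHom_trans_assoc, eqToHom_refl, Category.id_comp]
      try simp only [Category.comp_id]
      rw [← Category.assoc (mulX K a), ← Category.assoc (mulX K m), mulX_comp, mulX_comp, hab]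
      exact congrArg (mulX K) (Nat.add_comm b m)
    · have h1 : Pd K m i = 0 := dif_neg hi
      have h2 : Pd K n i = 0 := dif_neg hi
      rw [h1, h2, Limits.comp_zero, Limits.zero_comp])

/-- The components of `y^i_{m,n}`. -/
def yComp (m n a : ℕ) : ∀ i : ℤ, (P K m).X i ⟶ ((P K n)⟦(1 : ℤ)⟧).X i := fun i =>
  if h : i = -1 then
    eqToHom (by rw [h]; exact PobjNeg K) ≫ mulX K a ≫
      eqToHom (by rw [h]; show RMod K = Pobj K (-1 + 1); norm_num [PobjZero])
  else 0

/-- The chain map `P m ⟶ (P n)⟦1⟧` whose only nonzero component is multiplication by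
`x^a` in degree `-1` (landing in the degree `0` part of `P n`). -/
def yMap (m n a : ℕ) : P K m ⟶ (P K n)⟦(1 : ℤ)⟧ where
  f := yComp K m n a
  comm' := fun i j hij => by
    have hj : i + 1 = j := hij
    have hY : ∀ i' j' : ℤ, i' ≠ -2 → ((P K n)⟦(1 : ℤ)⟧).d i' j' = 0 := fun i' j' h => by
      rw [CochainComplex.shiftFunctor_obj_d',
        P_d_eq_zero K n _ _ (by change i' + 1 ≠ -1; omega), smul_zero]
      rfl
    by_cases hi : i = -1
    · rw [hY i j (by omega), Limits.comp_zero,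
        show yComp K m n a j = 0 from dif_neg (by omega), Limits.comp_zero]
    · rw [show yComp K m n a i = 0 from dif_neg hi, Limits.zero_comp]
      by_cases hj' : j = -1
      · rw [P_d_eq_zero K m i j hi, Limits.zero_comp]
      · rw [show yComp K m n a j = 0 from dif_neg hj', Limits.comp_zero]

/-- The homotopy category of cochain complexes of `K[x]`-modules, in which the bounded
homotopy category of finitely generated projectives embeds fully faithfully. -/
abbrev KbT := HomotopyCategory (ModuleCat (Polynomial K)) (ComplexShape.up ℤ)

abbrev Q : CochainComplex (ModuleCat (Polynomial K)) ℤ ⥤ KbT K :=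
  HomotopyCategory.quotient _ _

/-- `P n` as an object of the homotopy category. -/
abbrev Pbar (n : ℕ) : KbT K := (Q K).obj (P K n)

/-- The morphism `x^i_{m,n} : P m ⟶ P n` in the homotopy category, defined for
`max (0, n - m) ≤ i` (expressed with truncated subtraction on `ℕ`); in degree `-1` it is
multiplication by `x^(i+m-n)` and in degree `0` multiplication by `x^i`. -/
def xbar (m n i : ℕ) (h : n - m ≤ i) : Pbar K m ⟶ Pbar K n :=
  (Q K).map (xMap K m n (i + m - n) i (by omega))

/-- The identification `Q(P n ⟦1⟧) ≅ (Q (P n))⟦1⟧` in the homotopy category. -/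
def shIso (n : ℕ) : (Q K).obj ((P K n)⟦(1 : ℤ)⟧) ≅ (Pbar K n)⟦(1 : ℤ)⟧ :=
  ((Q K).commShiftIso (1 : ℤ)).app (P K n)

/-- The morphism `y^i_{m,n} : P m ⟶ (P n)[1]` in the homotopy category, defined for
`i ≤ m`; its only nonzero component is multiplication by `x^(m-i)` in degree `-1`. -/
def ybar (m n i : ℕ) (_h : i ≤ m) : Pbar K m ⟶ (Pbar K n)⟦(1 : ℤ)⟧ :=
  (Q K).map (yMap K m n (m - i)) ≫ (shIso K n).hom

/- The objects and the fourteen structure morphisms of the octahedron built on the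
composable morphisms `x¹₍₃,₃₎ : P₃ ⟶ P₃`, `x¹₍₃,₃₎ : P₃ ⟶ P₃`, following the paper:
`D = F = P₁[1] ⊕ P₁`, `E = P₂[1] ⊕ P₂`. -/

abbrev Dob : KbT K := (Q K).obj ((P K 1)⟦(1 : ℤ)⟧ ⊞ P K 1)
abbrev Eob : KbT K := (Q K).obj ((P K 2)⟦(1 : ℤ)⟧ ⊞ P K 2)

def fO : Pbar K 3 ⟶ Pbar K 3 := xbar K 3 3 1 (by omega)
def gO : Pbar K 3 ⟶ Pbar K 3 := xbar K 3 3 1 (by omega)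
def hO : Pbar K 3 ⟶ Pbar K 3 := xbar K 3 3 2 (by omega)
def f'O : Pbar K 3 ⟶ Dob K :=
  (Q K).map (biprod.lift (yMap K 3 1 0) (xMap K 3 1 2 0 (by omega)))
def g'O : Pbar K 3 ⟶ Dob K := f'O K
def h'O : Pbar K 3 ⟶ Eob K :=
  (Q K).map (biprod.lift (yMap K 3 2 0) (xMap K 3 2 1 0 (by omega)))
def f''O : Dob K ⟶ (Pbar K 3)⟦(1 : ℤ)⟧ :=
  (Q K).map (biprod.desc (-((xMap K 1 3 0 2 (by omega))⟦(1 : ℤ)⟧')) (yMap K 1 3 0)) ≫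
    (shIso K 3).hom
def g''O : Dob K ⟶ (Pbar K 3)⟦(1 : ℤ)⟧ := f''O K
def h''O : Eob K ⟶ (Pbar K 3)⟦(1 : ℤ)⟧ :=
  (Q K).map (biprod.desc (-((xMap K 2 3 0 1 (by omega))⟦(1 : ℤ)⟧')) (yMap K 2 3 0)) ≫
    (shIso K 3).hom
/-- `k = diag(x¹₍₁,₂₎[1], x¹₍₁,₂₎)` (first octahedron). -/
def kO : Dob K ⟶ Eob K :=
  (Q K).map (biprod.map ((xMap K 1 2 0 1 (by omega))⟦(1 : ℤ)⟧') (xMap K 1 2 0 1 (by omega)))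
/-- `k' = diag(x⁰₍₂,₁₎[1], x⁰₍₂,₁₎)` (first octahedron). -/
def k'O : Eob K ⟶ Dob K :=
  (Q K).map (biprod.map ((xMap K 2 1 1 0 (by omega))⟦(1 : ℤ)⟧') (xMap K 2 1 1 0 (by omega)))
/-- `k~ = (x¹₍₁,₂₎[1], y¹₍₁,₂₎; 0, x¹₍₁,₂₎)` (second octahedron). -/
def ktO : Dob K ⟶ Eob K :=
  (Q K).map (biprod.desc
    (biprod.lift ((xMap K 1 2 0 1 (by omega))⟦(1 : ℤ)⟧') 0)
    (biprod.lift (yMap K 1 2 0) (xMap K 1 2 0 1 (by omega))))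
/-- `k~' = (x⁰₍₂,₁₎[1], -y²₍₂,₁₎; 0, x⁰₍₂,₁₎)` (second octahedron). -/
def kt'O : Eob K ⟶ Dob K :=
  (Q K).map (biprod.desc
    (biprod.lift ((xMap K 2 1 1 0 (by omega))⟦(1 : ℤ)⟧') 0)
    (biprod.lift (-(yMap K 2 1 0)) (xMap K 2 1 1 0 (by omega))))
/-- `k'' = f'[1] ∘ g''`. -/
def k''O : Dob K ⟶ (Dob K)⟦(1 : ℤ)⟧ :=
  g''O K ≫ (shiftFunctor (KbT K) (1 : ℤ)).map (f'O K)
def lO : Pbar K 3 ⟶ Eob K :=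
  (Q K).map (biprod.lift (yMap K 3 2 1) (xMap K 3 2 2 1 (by omega)))
def l'O : Eob K ⟶ (Pbar K 3)⟦(1 : ℤ)⟧ :=
  (Q K).map (biprod.desc (-((xMap K 2 3 1 2 (by omega))⟦(1 : ℤ)⟧')) (yMap K 2 3 1)) ≫
    (shIso K 3).hom

/-! ### Auxiliary machinery for the proof -/

section OctAux

/-- The quotient module `K[x]/(x^m)` as an object of `ModuleCat`. -/
def QMod (m : ℕ) : ModuleCat (Polynomial K) :=
  ModuleCat.of (Polynomial K) (Polynomial K ⧸ (Ideal.span {(X : Polynomial K) ^ m}))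

/-- The quotient map `R ⟶ R/(x^m)`. -/
def qmk (m : ℕ) : RMod K ⟶ QMod K m :=
  ModuleCat.ofHom (Ideal.span {(X : Polynomial K) ^ m}).mkQ

lemma qmk_eq_iff (m : ℕ) (p q : Polynomial K) :
    qmk K m p = qmk K m q ↔ (X : Polynomial K) ^ m ∣ (p - q) := by
  constructor
  · intro h
    change Submodule.Quotient.mk p = Submodule.Quotient.mk q at h
    have := (Submodule.Quotient.eq _).mp h
    simpa [Ideal.mem_span_singleton] using this
  · intro h
    show Submodule.Quotient.mk p = Submodule.Quotient.mk q
    exact (Submodule.Quotient.eq _).mpr (by simpa [Ideal.mem_span_singleton] using h)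

/-- Composition `x^k • (map into R/x^m)` vanishes when `m ≤ k`. -/
lemma mulX_comp_kill (k m : ℕ) (hmk : m ≤ k) (h : RMod K ⟶ QMod K m) :
    mulX K k ≫ h = 0 := by
  apply ModuleCat.hom_ext
  apply LinearMap.ext
  intro r
  show h.hom (((X : Polynomial K) ^ k) • r) = 0
  rw [map_smul]
  obtain ⟨y, hy⟩ := (Ideal.span {(X : Polynomial K) ^ m}).mkQ_surjective (h.hom r)
  rw [← hy]
  show ((X : Polynomial K) ^ k) • (Submodule.Quotient.mk y :
      Polynomial K ⧸ Ideal.span {(X : Polynomial K) ^ m}) = 0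
  rw [← Submodule.Quotient.mk_smul, Submodule.Quotient.mk_eq_zero]
  have : (X : Polynomial K) ^ m ∣ (X : Polynomial K) ^ k • y :=
    Dvd.dvd.mul_right (pow_dvd_pow _ hmk) y
  simpa [Ideal.mem_span_singleton] using this

/-- The graded pieces of stalk complexes. -/
def stObj (M : ModuleCat (Polynomial K)) (j : ℤ) : ℤ → ModuleCat (Polynomial K) :=
  fun i => if i = j then M else ModuleCat.of (Polynomial K) PUnit

/-- The stalk complex with `M` placed in degree `j`. -/
def stalk (M : ModuleCat (Polynomial K)) (j : ℤ) :
    CochainComplex (ModuleCat (Polynomial K)) ℤ :=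
  CochainComplex.of (stObj K M j) (fun _ => 0) (fun _ => by simp)

lemma stalk_d (M : ModuleCat (Polynomial K)) (j i i' : ℤ) : (stalk K M j).d i i' = 0 := by
  by_cases h : i + 1 = i'
  · subst h; exact CochainComplex.of_d (α := ℤ) (stObj K M j) (fun _ => 0) i
  · exact HomologicalComplex.shape _ _ _ (by simpa using h)

lemma stalk_X_self (M : ModuleCat (Polynomial K)) (j : ℤ) : (stalk K M j).X j = M :=
  if_pos rfl

/-- Components of a chain map into a stalk complex. -/
def toStalkF (Xc : CochainComplex (ModuleCat (Polynomial K)) ℤ)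
    (M : ModuleCat (Polynomial K)) (j : ℤ) (φ : Xc.X j ⟶ M) :
    ∀ i, Xc.X i ⟶ (stalk K M j).X i := fun i =>
  if h : i = j then
    eqToHom (congrArg Xc.X h) ≫ φ ≫ eqToHom (by rw [h, stalk_X_self])
  else 0

/-- Build a chain map into a stalk complex from a map in degree `j`. -/
def toStalk (Xc : CochainComplex (ModuleCat (Polynomial K)) ℤ)
    (M : ModuleCat (Polynomial K)) (j : ℤ) (φ : Xc.X j ⟶ M)
    (hd : ∀ i, Xc.d i j ≫ φ = 0) : Xc ⟶ stalk K M j where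
  f := toStalkF K Xc M j φ
  comm' := fun i i' _ => by
    rw [stalk_d, Limits.comp_zero]
    by_cases h : i' = j
    · subst h
      rw [show toStalkF K Xc M i' φ i' =
          eqToHom (congrArg Xc.X rfl) ≫ φ ≫ eqToHom (by rw [stalk_X_self]) from
        dif_pos rfl]
      rw [show eqToHom (congrArg Xc.X rfl) = 𝟙 (Xc.X i') from rfl, Category.id_comp,
        ← Category.assoc, hd i, Limits.zero_comp]
    · rw [show toStalkF K Xc M j φ i' = 0 from dif_neg h, Limits.comp_zero]

lemma toStalk_f_self (Xc : CochainComplex (ModuleCat (Polynomial K)) ℤ)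
    (M : ModuleCat (Polynomial K)) (j : ℤ) (φ : Xc.X j ⟶ M)
    (hd : ∀ i, Xc.d i j ≫ φ = 0) :
    (toStalk K Xc M j φ hd).f j = φ ≫ eqToHom (stalk_X_self K M j).symm := by
  show toStalkF K Xc M j φ j = _
  rw [show toStalkF K Xc M j φ j =
      eqToHom (congrArg Xc.X rfl) ≫ φ ≫ eqToHom (by rw [stalk_X_self]) from dif_pos rfl]
  rw [show eqToHom (congrArg Xc.X rfl) = 𝟙 (Xc.X j) from rfl, Category.id_comp]

/-- Two chain maps to a stalk that agree in the homotopy category agree in degree `j`,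
provided the correction term vanishes. -/
lemma stalk_faithful (Xc : CochainComplex (ModuleCat (Polynomial K)) ℤ)
    (M : ModuleCat (Polynomial K)) (j : ℤ)
    (f g : Xc ⟶ stalk K M j)
    (hcor : ∀ h : Xc.X (j + 1) ⟶ (stalk K M j).X j, Xc.d j (j + 1) ≫ h = 0)
    (heq : (Q K).map f = (Q K).map g) : f.f j = g.f j := by
  have H := HomotopyCategory.homotopyOfEq f g heq
  have hc := H.comm j
  rw [dNext_eq H.hom (show (ComplexShape.up ℤ).Rel j (j + 1) by simp)] at hc
  rw [prevD_eq H.hom (show (ComplexShape.up ℤ).Rel (j - 1) j by simp)] at hc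
  rw [hcor (H.hom (j + 1) j), stalk_d, Limits.comp_zero, zero_add, zero_add] at hc
  exact hc

end OctAux
section OctAux2

lemma P_d_neg (n : ℕ) : (P K n).d (-1) 0 = mulX K n := rfl

lemma xMap_f_neg (m n a b : ℕ) (h : a + n = b + m) :
    (xMap K m n a b h).f (-1) = mulX K a := rfl

lemma xMap_f_zero (m n a b : ℕ) (h : a + n = b + m) :
    (xMap K m n a b h).f 0 = mulX K b := rfl

lemma xMap_shift_f_neg (m n a b : ℕ) (h : a + n = b + m) :
    ((xMap K m n a b h)⟦(1 : ℤ)⟧').f (-1) = mulX K b := rfl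

lemma yMap_f_neg (m n a : ℕ) : (yMap K m n a).f (-1) = mulX K a := rfl

lemma yMap_f_zero (m n a : ℕ) : (yMap K m n a).f 0 = 0 := by
  show yComp K m n a 0 = 0
  rw [yComp, dif_neg (by norm_num)]

lemma A_shift_f_neg {Xc Yc : CochainComplex (ModuleCat (Polynomial K)) ℤ} (A : Xc ⟶ Yc) :
    (A⟦(1 : ℤ)⟧').f (-1) = A.f 0 := rfl

/-- View an element of `RMod K` as a polynomial. -/
def toP : ↑(RMod K) → Polynomial K := fun z => z

/-- Endomorphisms of `R` are multiplication by a polynomial. -/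
lemma endo_eval (f : RMod K ⟶ RMod K) (r : Polynomial K) :
    toP K (f r) = r * toP K (f (1 : Polynomial K)) := by
  simpa [toP, smul_eq_mul] using f.hom.map_smul r (1 : Polynomial K)

lemma mulX_eval (a : ℕ) (r : Polynomial K) :
    toP K (mulX K a r) = (X : Polynomial K) ^ a * r := rfl

end OctAux2
section OctAux3

/-- The degree-`0` quotient map viewed with source `(P n).X 0`. -/
def qmk0 (n m : ℕ) : (P K n).X 0 ⟶ QMod K m := qmk K m

/-- The degree-`(-1)` quotient map viewed with source `((P n)⟦1⟧).X (-1)`. -/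
def qmkNeg (n m : ℕ) : ((P K n)⟦(1 : ℤ)⟧).X (-1) ⟶ QMod K m := qmk K m

lemma hdP0 (n m : ℕ) (hm : m ≤ n) : ∀ i, (P K n).d i 0 ≫ qmk0 K n m = 0 := by
  intro i
  by_cases hi : i = -1
  · subst hi
    rw [P_d_neg]
    exact mulX_comp_kill K n m hm _
  · rw [P_d_eq_zero K n i 0 hi, Limits.zero_comp]

lemma hdPs (n m : ℕ) (hm : m ≤ n) :
    ∀ i, ((P K n)⟦(1 : ℤ)⟧).d i (-1) ≫ qmkNeg K n m = 0 := by
  intro i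
  rw [CochainComplex.shiftFunctor_obj_d']
  by_cases hi : i = -2
  · subst hi
    rw [Int.negOnePow_one, Units.neg_smul, one_smul]
    change (-(mulX K n)) ≫ qmk K m = 0
    rw [Preadditive.neg_comp, mulX_comp_kill K n m hm, neg_zero]
  · rw [P_d_eq_zero K n (i + 1) (-1 + 1) (by omega), smul_zero]
    exact Limits.zero_comp

/-- Detector `P n ⟶ (R/x^m)[0]`. -/
def detP (n m : ℕ) (hm : m ≤ n) : P K n ⟶ stalk K (QMod K m) 0 :=
  toStalk K (P K n) (QMod K m) 0 (qmk0 K n m) (hdP0 K n m hm)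

/-- Detector `(P n)⟦1⟧ ⟶ (R/x^m)[-1]`. -/
def detPs (n m : ℕ) (hm : m ≤ n) : (P K n)⟦(1 : ℤ)⟧ ⟶ stalk K (QMod K m) (-1) :=
  toStalk K ((P K n)⟦(1 : ℤ)⟧) (QMod K m) (-1) (qmkNeg K n m) (hdPs K n m hm)

lemma detP_cancel (n m : ℕ) (hm : m ≤ n) :
    (detP K n m hm).f 0 ≫ eqToHom (stalk_X_self K (QMod K m) 0) = qmk0 K n m := by
  rw [detP, toStalk_f_self]
  simp

lemma detPs_cancel (n m : ℕ) (hm : m ≤ n) :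
    (detPs K n m hm).f (-1) ≫ eqToHom (stalk_X_self K (QMod K m) (-1)) = qmkNeg K n m := by
  rw [detPs, toStalk_f_self]
  rw [Category.assoc, eqToHom_trans, eqToHom_refl, Category.comp_id]

/-- Correction vanishing for sources `P n` at degree `0`. -/
lemma hcor0 (n : ℕ) (M : ModuleCat (Polynomial K)) :
    ∀ h : (P K n).X (0 + 1) ⟶ (stalk K M 0).X 0, (P K n).d 0 (0 + 1) ≫ h = 0 := by
  intro h
  rw [P_d_eq_zero K n 0 (0 + 1) (by norm_num), Limits.zero_comp]

/-- Correction vanishing for sources `P n` at degree `-1` with target `R/x^m`, `m ≤ n`. -/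
lemma hcorNeg (n m : ℕ) (hm : m ≤ n) :
    ∀ h : (P K n).X (-1 + 1) ⟶ (stalk K (QMod K m) (-1)).X (-1),
      (P K n).d (-1) (-1 + 1) ≫ h = 0 := by
  intro h
  rw [show (P K n).d (-1) (-1 + 1) = mulX K n from rfl]
  exact mulX_comp_kill K n m hm h

/-- `biprod.lift` as a sum. -/
lemma lift_eq {Cc : Type*} [Category Cc] [Preadditive Cc] [HasBinaryBiproducts Cc]
    {Xo A B : Cc} (f : Xo ⟶ A) (g : Xo ⟶ B) :
    biprod.lift f g = f ≫ biprod.inl + g ≫ biprod.inr := by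
  apply biprod.hom_ext <;> simp

/-- `biprod.desc` as a sum. -/
lemma desc_eq {Cc : Type*} [Category Cc] [Preadditive Cc] [HasBinaryBiproducts Cc]
    {Xo A B : Cc} (f : A ⟶ Xo) (g : B ⟶ Xo) :
    biprod.desc f g = biprod.fst ≫ f + biprod.snd ≫ g := by
  apply biprod.hom_ext' <;> simp

end OctAux3
section OctAux4

/-- Multiplication by a polynomial, as an endomorphism of `RMod`. -/
def pc (p : Polynomial K) : RMod K ⟶ RMod K :=
  ModuleCat.ofHom (LinearMap.mulLeft (Polynomial K) p)

lemma mulX_pc (a : ℕ) : mulX K a = pc K ((X : Polynomial K) ^ a) := rfl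

lemma pc_comp (p q : Polynomial K) : pc K p ≫ pc K q = pc K (q * p) := by
  dsimp [pc]
  rw [LinearMap.mulLeft_mul]
  rfl

lemma pc_add (p q : Polynomial K) : pc K p + pc K q = pc K (p + q) := by
  apply ModuleCat.hom_ext
  apply LinearMap.ext
  intro r
  show p * toP K r + q * toP K r = (p + q) * toP K r
  ring

lemma pc_neg (p : Polynomial K) : -pc K p = pc K (-p) := by
  apply ModuleCat.hom_ext
  apply LinearMap.ext
  intro r
  show -(p * toP K r) = (-p) * toP K r
  ring

/-- The scalar by which an endomorphism of `R` acts. -/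
def val (f : RMod K ⟶ RMod K) : Polynomial K := toP K (f (1 : Polynomial K))

lemma endo_eval' (f : RMod K ⟶ RMod K) (r : ↑(RMod K)) :
    toP K (f r) = toP K r * val K f := by
  have h0 := f.hom.map_smul (toP K r) ((1 : Polynomial K) : ↑(RMod K))
  have h1 : ((toP K r) • ((1 : Polynomial K) : ↑(RMod K))) = r := by
    show toP K r * 1 = toP K r
    ring
  rw [h1] at h0
  rw [h0]
  rfl

lemma endo_pc (f : RMod K ⟶ RMod K) : f = pc K (val K f) := by
  apply ModuleCat.hom_ext
  apply LinearMap.ext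
  intro r
  have h2 : toP K (f r) = val K f * toP K r := by
    rw [endo_eval' K f r]
    exact mul_comm _ _
  exact h2

lemma qmk_pc_cancel (m : ℕ) (t s : Polynomial K)
    (h : pc K t ≫ qmk K m = pc K s ≫ qmk K m) : (X : Polynomial K) ^ m ∣ t - s := by
  have e : qmk K m (t * 1) = qmk K m (s * 1) := DFunLike.congr_fun (congrArg ModuleCat.Hom.hom h) (1 : Polynomial K)
  have := (qmk_eq_iff K m (t * 1) (s * 1)).mp e
  simpa using this

/-- Components of chain maps, viewed as endomorphisms of `R`. -/
def cmp00 {m n : ℕ} (F : P K m ⟶ P K n) : RMod K ⟶ RMod K := F.f 0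

def cmpNN {m n : ℕ} (F : P K m ⟶ P K n) : RMod K ⟶ RMod K :=
  show Pobj K (-1) ⟶ Pobj K (-1) from (F.f (-1) :)

def cmpY {m n : ℕ} (F : P K m ⟶ (P K n)⟦(1 : ℤ)⟧) : RMod K ⟶ RMod K :=
  show Pobj K (-1) ⟶ Pobj K (-1 + 1) from (F.f (-1) :)

/-- For an endomorphism of `P n`, the two scalar components agree. -/
lemma cmp_comm {n : ℕ} (F : P K n ⟶ P K n) : val K (cmpNN K F) = val K (cmp00 K F) := by
  have hc := F.comm' (i := -1) (j := 0) (by simp)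
  have hc2 : cmpNN K F ≫ mulX K n = mulX K n ≫ cmp00 K F := hc
  rw [endo_pc K (cmpNN K F), endo_pc K (cmp00 K F), mulX_pc, pc_comp, pc_comp] at hc2
  have hval : (X : Polynomial K) ^ n * val K (cmpNN K F) =
      val K (cmp00 K F) * (X : Polynomial K) ^ n := by
    have := DFunLike.congr_fun (congrArg ModuleCat.Hom.hom hc2) (1 : Polynomial K)
    have e2 : ((X : Polynomial K) ^ n * val K (cmpNN K F)) * 1 =
        (val K (cmp00 K F) * (X : Polynomial K) ^ n) * 1 := this
    simpa using e2
  have hX : ((X : Polynomial K) ^ n) ≠ 0 := pow_ne_zero _ X_ne_zero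
  apply mul_left_cancel₀ hX
  rw [hval]
  ring

end OctAux4
section OctSteps

/-- Extraction from the `f`- and `g`-equations. -/
lemma stepX (A B : P K 3 ⟶ P K 3)
    (h : (Q K).map A ≫ (Q K).map (xMap K 3 3 1 1 (by omega)) =
         (Q K).map (xMap K 3 3 1 1 (by omega)) ≫ (Q K).map B) :
    (X : Polynomial K) ^ 3 ∣
      (X : Polynomial K) * val K (cmp00 K A) - (X : Polynomial K) * val K (cmp00 K B) := by
  have heq : (Q K).map (A ≫ xMap K 3 3 1 1 (by omega) ≫ detP K 3 3 le_rfl) =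
      (Q K).map (xMap K 3 3 1 1 (by omega) ≫ B ≫ detP K 3 3 le_rfl) := by
    simp only [Functor.map_comp]
    rw [reassoc_of% h]
  have hf := stalk_faithful K _ _ 0 _ _ (hcor0 K 3 _) heq
  have hf2 := congrArg (fun z => z ≫ eqToHom (stalk_X_self K (QMod K 3) 0)) hf
  simp only [HomologicalComplex.comp_f, Category.assoc] at hf2
  have hf3 : cmp00 K A ≫ mulX K 1 ≫ qmk K 3 = mulX K 1 ≫ cmp00 K B ≫ qmk K 3 := hf2
  rw [endo_pc K (cmp00 K A), endo_pc K (cmp00 K B), mulX_pc] at hf3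
  rw [← Category.assoc, ← Category.assoc, pc_comp, pc_comp] at hf3
  have hgoal : (X : Polynomial K) * val K (cmp00 K A) - (X : Polynomial K) * val K (cmp00 K B)
      = (X : Polynomial K) ^ 1 * val K (cmp00 K A)
        - val K (cmp00 K B) * (X : Polynomial K) ^ 1 := by ring
  rw [hgoal]
  exact qmk_pc_cancel K 3 _ _ hf3

end OctSteps
section OctSteps2

lemma pc_one : pc K 1 = 𝟙 (RMod K) := by
  dsimp [pc]
  rw [LinearMap.mulLeft_one]
  rfl

/-- Splitting a composition through a biproduct. -/
lemma split3 {Cc : Type*} [Category Cc] [Preadditive Cc] [HasBinaryBiproducts Cc]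
    {Wo V A B Yo : Cc} (i : Wo ⟶ V) (Ψ : V ⟶ A ⊞ B) (t : A ⊞ B ⟶ Yo) :
    i ≫ Ψ ≫ t = (i ≫ Ψ ≫ biprod.fst) ≫ (biprod.inl ≫ t)
      + (i ≫ Ψ ≫ biprod.snd) ≫ (biprod.inr ≫ t) := by
  conv_lhs => rw [← Category.id_comp t, ← biprod.total]
  simp only [Preadditive.add_comp, Preadditive.comp_add, Category.assoc]

/-- Extraction from the identity `φB ∘ φB⁻¹ = 1`. -/
lemma stepInv (B B' : P K 3 ⟶ P K 3)
    (h : (Q K).map (B ≫ B') = (Q K).map (𝟙 (P K 3))) :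
    (X : Polynomial K) ∣ val K (cmp00 K B') * val K (cmp00 K B) - 1 := by
  have heq : (Q K).map ((B ≫ B') ≫ detP K 3 1 (by norm_num)) =
      (Q K).map (𝟙 (P K 3) ≫ detP K 3 1 (by norm_num)) := by
    rw [Functor.map_comp, h, Functor.map_comp]
  have hf := stalk_faithful K _ _ 0 _ _ (hcor0 K 3 _) heq
  have hf2 := congrArg (fun z => z ≫ eqToHom (stalk_X_self K (QMod K 1) 0)) hf
  simp only [HomologicalComplex.comp_f, HomologicalComplex.id_f, Category.assoc,
    Category.id_comp] at hf2
  have hf3 : cmp00 K B ≫ cmp00 K B' ≫ qmk K 1 = pc K 1 ≫ qmk K 1 := by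
    rw [pc_one, Category.id_comp]
    exact hf2
  rw [endo_pc K (cmp00 K B), endo_pc K (cmp00 K B'), ← Category.assoc, pc_comp] at hf3
  have hd := qmk_pc_cancel K 1 _ _ hf3
  have hgoal : val K (cmp00 K B') * val K (cmp00 K B) - 1
      = val K (cmp00 K B') * val K (cmp00 K B) - 1 := rfl
  simpa [pow_one] using hd

/-- Extraction from the `f'`-equation (bottom component). -/
lemma step4 (B : P K 3 ⟶ P K 3)
    (Ψ : (P K 1)⟦(1 : ℤ)⟧ ⊞ P K 1 ⟶ (P K 1)⟦(1 : ℤ)⟧ ⊞ P K 1)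
    (h : (Q K).map B ≫ (Q K).map (biprod.lift (yMap K 3 1 0) (xMap K 3 1 2 0 (by omega))) =
         (Q K).map (biprod.lift (yMap K 3 1 0) (xMap K 3 1 2 0 (by omega))) ≫ (Q K).map Ψ) :
    (X : Polynomial K) ∣ val K (cmp00 K B)
      - val K (cmp00 K (biprod.inr ≫ Ψ ≫ biprod.snd)) := by
  have cl : B ≫ xMap K 3 1 2 0 (by omega) ≫ detP K 1 1 le_rfl =
      B ≫ biprod.lift (yMap K 3 1 0) (xMap K 3 1 2 0 (by omega)) ≫
        (biprod.snd ≫ detP K 1 1 le_rfl) := by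
    simp
  have cr : yMap K 3 1 0 ≫ (biprod.inl ≫ Ψ ≫ biprod.snd) ≫ detP K 1 1 le_rfl
      + xMap K 3 1 2 0 (by omega) ≫ (biprod.inr ≫ Ψ ≫ biprod.snd) ≫ detP K 1 1 le_rfl
      = biprod.lift (yMap K 3 1 0) (xMap K 3 1 2 0 (by omega)) ≫ Ψ ≫
        (biprod.snd ≫ detP K 1 1 le_rfl) := by
    rw [lift_eq (yMap K 3 1 0) (xMap K 3 1 2 0 (by omega))]
    simp only [Preadditive.add_comp, Category.assoc]
  have heq : (Q K).map (B ≫ xMap K 3 1 2 0 (by omega) ≫ detP K 1 1 le_rfl) =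
      (Q K).map (yMap K 3 1 0 ≫ (biprod.inl ≫ Ψ ≫ biprod.snd) ≫ detP K 1 1 le_rfl
        + xMap K 3 1 2 0 (by omega) ≫ (biprod.inr ≫ Ψ ≫ biprod.snd) ≫ detP K 1 1 le_rfl) := by
    rw [cl, cr]
    simp only [Functor.map_comp]
    rw [reassoc_of% h]
  have hf := stalk_faithful K _ _ 0 _ _ (hcor0 K 3 _) heq
  have hf2 := congrArg (fun z => z ≫ eqToHom (stalk_X_self K (QMod K 1) 0)) hf
  simp only [HomologicalComplex.comp_f, HomologicalComplex.add_f_apply, Category.assoc,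
    Preadditive.add_comp] at hf2
  simp only [yMap_f_zero, Limits.zero_comp, zero_add] at hf2
  have hf3 : cmp00 K B ≫ mulX K 0 ≫ qmk K 1 =
      mulX K 0 ≫ cmp00 K (biprod.inr ≫ Ψ ≫ biprod.snd) ≫ qmk K 1 := hf2
  rw [endo_pc K (cmp00 K B), endo_pc K (cmp00 K (biprod.inr ≫ Ψ ≫ biprod.snd)), mulX_pc,
    ← Category.assoc, ← Category.assoc, pc_comp, pc_comp] at hf3
  have hd := qmk_pc_cancel K 1 _ _ hf3
  have hgoal : val K (cmp00 K B) - val K (cmp00 K (biprod.inr ≫ Ψ ≫ biprod.snd))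
      = (X : Polynomial K) ^ 0 * val K (cmp00 K B)
        - val K (cmp00 K (biprod.inr ≫ Ψ ≫ biprod.snd)) * (X : Polynomial K) ^ 0 := by
    ring
  rw [hgoal]
  simpa [pow_one] using hd

/-- Extraction from the `h'`-equation (bottom component). -/
lemma step8b (W : P K 3 ⟶ P K 3)
    (Φ : (P K 2)⟦(1 : ℤ)⟧ ⊞ P K 2 ⟶ (P K 2)⟦(1 : ℤ)⟧ ⊞ P K 2)
    (h : (Q K).map W ≫ (Q K).map (biprod.lift (yMap K 3 2 0) (xMap K 3 2 1 0 (by omega))) =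
         (Q K).map (biprod.lift (yMap K 3 2 0) (xMap K 3 2 1 0 (by omega))) ≫ (Q K).map Φ) :
    (X : Polynomial K) ^ 2 ∣ val K (cmp00 K W)
      - val K (cmp00 K (biprod.inr ≫ Φ ≫ biprod.snd)) := by
  have cl : W ≫ xMap K 3 2 1 0 (by omega) ≫ detP K 2 2 le_rfl =
      W ≫ biprod.lift (yMap K 3 2 0) (xMap K 3 2 1 0 (by omega)) ≫
        (biprod.snd ≫ detP K 2 2 le_rfl) := by
    simp
  have cr : yMap K 3 2 0 ≫ (biprod.inl ≫ Φ ≫ biprod.snd) ≫ detP K 2 2 le_rfl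
      + xMap K 3 2 1 0 (by omega) ≫ (biprod.inr ≫ Φ ≫ biprod.snd) ≫ detP K 2 2 le_rfl
      = biprod.lift (yMap K 3 2 0) (xMap K 3 2 1 0 (by omega)) ≫ Φ ≫
        (biprod.snd ≫ detP K 2 2 le_rfl) := by
    rw [lift_eq (yMap K 3 2 0) (xMap K 3 2 1 0 (by omega))]
    simp only [Preadditive.add_comp, Category.assoc]
  have heq : (Q K).map (W ≫ xMap K 3 2 1 0 (by omega) ≫ detP K 2 2 le_rfl) =
      (Q K).map (yMap K 3 2 0 ≫ (biprod.inl ≫ Φ ≫ biprod.snd) ≫ detP K 2 2 le_rfl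
        + xMap K 3 2 1 0 (by omega) ≫ (biprod.inr ≫ Φ ≫ biprod.snd) ≫ detP K 2 2 le_rfl) := by
    rw [cl, cr]
    simp only [Functor.map_comp]
    rw [reassoc_of% h]
  have hf := stalk_faithful K _ _ 0 _ _ (hcor0 K 3 _) heq
  have hf2 := congrArg (fun z => z ≫ eqToHom (stalk_X_self K (QMod K 2) 0)) hf
  simp only [HomologicalComplex.comp_f, HomologicalComplex.add_f_apply, Category.assoc,
    Preadditive.add_comp] at hf2
  simp only [yMap_f_zero, Limits.zero_comp, zero_add] at hf2
  have hf3 : cmp00 K W ≫ mulX K 0 ≫ qmk K 2 =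
      mulX K 0 ≫ cmp00 K (biprod.inr ≫ Φ ≫ biprod.snd) ≫ qmk K 2 := hf2
  rw [endo_pc K (cmp00 K W), endo_pc K (cmp00 K (biprod.inr ≫ Φ ≫ biprod.snd)), mulX_pc,
    ← Category.assoc, ← Category.assoc, pc_comp, pc_comp] at hf3
  have hd := qmk_pc_cancel K 2 _ _ hf3
  have hgoal : val K (cmp00 K W) - val K (cmp00 K (biprod.inr ≫ Φ ≫ biprod.snd))
      = (X : Polynomial K) ^ 0 * val K (cmp00 K W)
        - val K (cmp00 K (biprod.inr ≫ Φ ≫ biprod.snd)) * (X : Polynomial K) ^ 0 := by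
    ring
  rw [hgoal]
  exact hd

end OctSteps2
section OctSteps3

set_option maxHeartbeats 1000000 in
/-- Extraction from the `k~`-equation (off-diagonal component). -/
lemma step10 (Ψ : (P K 1)⟦(1 : ℤ)⟧ ⊞ P K 1 ⟶ (P K 1)⟦(1 : ℤ)⟧ ⊞ P K 1)
    (Φ : (P K 2)⟦(1 : ℤ)⟧ ⊞ P K 2 ⟶ (P K 2)⟦(1 : ℤ)⟧ ⊞ P K 2)
    (h : (Q K).map Ψ ≫ (Q K).map (biprod.desc
        (biprod.lift ((xMap K 1 2 0 1 (by omega))⟦(1 : ℤ)⟧') 0)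
        (biprod.lift (yMap K 1 2 0) (xMap K 1 2 0 1 (by omega)))) =
      (Q K).map (biprod.map ((xMap K 1 2 0 1 (by omega))⟦(1 : ℤ)⟧')
        (xMap K 1 2 0 1 (by omega))) ≫ (Q K).map Φ) :
    (X : Polynomial K) ∣ val K (cmpNN K (biprod.inr ≫ Ψ ≫ biprod.snd))
      - val K (cmpY K (biprod.inr ≫ Φ ≫ biprod.fst)) := by
  have redL : biprod.inr ≫ Ψ ≫ biprod.desc
        (biprod.lift ((xMap K 1 2 0 1 (by omega))⟦(1 : ℤ)⟧') 0)
        (biprod.lift (yMap K 1 2 0) (xMap K 1 2 0 1 (by omega))) ≫ biprod.fst ≫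
          detPs K 2 1 (by norm_num)
      = (biprod.inr ≫ Ψ ≫ biprod.fst) ≫
          ((xMap K 1 2 0 1 (by omega))⟦(1 : ℤ)⟧' ≫ detPs K 2 1 (by norm_num))
        + (biprod.inr ≫ Ψ ≫ biprod.snd) ≫ (yMap K 1 2 0 ≫ detPs K 2 1 (by norm_num)) := by
    rw [split3 biprod.inr Ψ]
    rw [show biprod.inl ≫ biprod.desc
        (biprod.lift ((xMap K 1 2 0 1 (by omega))⟦(1 : ℤ)⟧') 0)
        (biprod.lift (yMap K 1 2 0) (xMap K 1 2 0 1 (by omega))) ≫ biprod.fst ≫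
          detPs K 2 1 (by norm_num) =
        (xMap K 1 2 0 1 (by omega))⟦(1 : ℤ)⟧' ≫ detPs K 2 1 (by norm_num) from by
      simp only [biprod.inl_desc_assoc, biprod.lift_fst_assoc]]
    rw [show biprod.inr ≫ biprod.desc
        (biprod.lift ((xMap K 1 2 0 1 (by omega))⟦(1 : ℤ)⟧') 0)
        (biprod.lift (yMap K 1 2 0) (xMap K 1 2 0 1 (by omega))) ≫ biprod.fst ≫
          detPs K 2 1 (by norm_num) =
        yMap K 1 2 0 ≫ detPs K 2 1 (by norm_num) from by
      simp only [biprod.inr_desc_assoc, biprod.lift_fst_assoc]]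
  have redR : biprod.inr ≫ (biprod.map ((xMap K 1 2 0 1 (by omega))⟦(1 : ℤ)⟧')
        (xMap K 1 2 0 1 (by omega))) ≫ Φ ≫ biprod.fst ≫ detPs K 2 1 (by norm_num)
      = xMap K 1 2 0 1 (by omega) ≫
          (biprod.inr ≫ Φ ≫ biprod.fst) ≫ detPs K 2 1 (by norm_num) := by
    simp only [biprod.inr_map_assoc, Category.assoc]
  have heq : (Q K).map ((biprod.inr ≫ Ψ ≫ biprod.fst) ≫
          ((xMap K 1 2 0 1 (by omega))⟦(1 : ℤ)⟧' ≫ detPs K 2 1 (by norm_num))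
        + (biprod.inr ≫ Ψ ≫ biprod.snd) ≫ (yMap K 1 2 0 ≫ detPs K 2 1 (by norm_num)))
      = (Q K).map (xMap K 1 2 0 1 (by omega) ≫
          (biprod.inr ≫ Φ ≫ biprod.fst) ≫ detPs K 2 1 (by norm_num)) := by
    rw [← redL, ← redR]
    simp only [Functor.map_comp]
    rw [reassoc_of% h]
  have hf := stalk_faithful K _ _ (-1) _ _ (hcorNeg K 1 1 le_rfl) heq
  have hf2 := congrArg (fun z => z ≫ eqToHom (stalk_X_self K (QMod K 1) (-1))) hf
  simp only [HomologicalComplex.comp_f, HomologicalComplex.add_f_apply, Category.assoc,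
    Preadditive.add_comp] at hf2
  have hf3 : cmpY K (biprod.inr ≫ Ψ ≫ biprod.fst) ≫ mulX K 1 ≫ qmk K 1
      + cmpNN K (biprod.inr ≫ Ψ ≫ biprod.snd) ≫ mulX K 0 ≫ qmk K 1
      = mulX K 0 ≫ cmpY K (biprod.inr ≫ Φ ≫ biprod.fst) ≫ qmk K 1 := hf2
  rw [endo_pc K (cmpY K (biprod.inr ≫ Ψ ≫ biprod.fst)),
    endo_pc K (cmpNN K (biprod.inr ≫ Ψ ≫ biprod.snd)),
    endo_pc K (cmpY K (biprod.inr ≫ Φ ≫ biprod.fst))] at hf3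
  simp only [mulX_pc, ← Category.assoc, pc_comp] at hf3
  rw [← Preadditive.add_comp, pc_add] at hf3
  have hd := qmk_pc_cancel K 1 _ _ hf3
  set ev := val K (cmpY K (biprod.inr ≫ Ψ ≫ biprod.fst)) with hev
  set vv := val K (cmpNN K (biprod.inr ≫ Ψ ≫ biprod.snd)) with hvv
  set gv := val K (cmpY K (biprod.inr ≫ Φ ≫ biprod.fst)) with hgv
  rw [show vv - gv = ((X : Polynomial K) ^ 1 * ev + (X : Polynomial K) ^ 0 * vv
        - gv * (X : Polynomial K) ^ 0) - (X : Polynomial K) * ev from by ring]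
  exact dvd_sub (by simpa [pow_one] using hd) (dvd_mul_right _ _)

end OctSteps3
section OctSteps4

set_option maxHeartbeats 1000000 in
/-- Extraction from the `h''`-equation (second component). -/
lemma step9b (A : P K 3 ⟶ P K 3)
    (Φ : (P K 2)⟦(1 : ℤ)⟧ ⊞ P K 2 ⟶ (P K 2)⟦(1 : ℤ)⟧ ⊞ P K 2)
    (h : (Q K).map Φ ≫ ((Q K).map (biprod.desc (-((xMap K 2 3 0 1 (by omega))⟦(1 : ℤ)⟧'))
          (yMap K 2 3 0)) ≫ (shIso K 3).hom)
       = ((Q K).map (biprod.desc (-((xMap K 2 3 0 1 (by omega))⟦(1 : ℤ)⟧'))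
          (yMap K 2 3 0)) ≫ (shIso K 3).hom) ≫
            (shiftFunctor (KbT K) (1 : ℤ)).map ((Q K).map A)) :
    (X : Polynomial K) ^ 2 ∣ (val K (cmpNN K (biprod.inr ≫ Φ ≫ biprod.snd))
      - (X : Polynomial K) * val K (cmpY K (biprod.inr ≫ Φ ≫ biprod.fst)))
      - val K (cmp00 K A) := by
  have hnat : (Q K).map
        ((shiftFunctor (CochainComplex (ModuleCat (Polynomial K)) ℤ) (1 : ℤ)).map A) ≫
          (shIso K 3).hom
      = (shIso K 3).hom ≫ (shiftFunctor (KbT K) (1 : ℤ)).map ((Q K).map A) :=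
    ((Q K).commShiftIso (1 : ℤ)).hom.naturality A
  have key : (Q K).map (biprod.inr ≫ Φ ≫ biprod.desc
        (-((xMap K 2 3 0 1 (by omega))⟦(1 : ℤ)⟧')) (yMap K 2 3 0) ≫ detPs K 3 2 (by norm_num))
      = (Q K).map (biprod.inr ≫ biprod.desc
        (-((xMap K 2 3 0 1 (by omega))⟦(1 : ℤ)⟧')) (yMap K 2 3 0) ≫
          A⟦(1 : ℤ)⟧' ≫ detPs K 3 2 (by norm_num)) := by
    have e1 : (Q K).map (biprod.inr ≫ Φ ≫ biprod.desc
          (-((xMap K 2 3 0 1 (by omega))⟦(1 : ℤ)⟧')) (yMap K 2 3 0) ≫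
            detPs K 3 2 (by norm_num))
        = (Q K).map biprod.inr ≫ ((Q K).map Φ ≫
            ((Q K).map (biprod.desc (-((xMap K 2 3 0 1 (by omega))⟦(1 : ℤ)⟧'))
              (yMap K 2 3 0)) ≫ (shIso K 3).hom)) ≫ (shIso K 3).inv ≫
                (Q K).map (detPs K 3 2 (by norm_num)) := by
      simp only [Functor.map_comp, Category.assoc, Iso.hom_inv_id_assoc]
    rw [e1, h]
    simp only [Category.assoc]
    rw [← reassoc_of% hnat]
    simp only [Iso.hom_inv_id_assoc, ← Functor.map_comp]
  have redL : biprod.inr ≫ Φ ≫ biprod.desc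
        (-((xMap K 2 3 0 1 (by omega))⟦(1 : ℤ)⟧')) (yMap K 2 3 0) ≫ detPs K 3 2 (by norm_num)
      = (biprod.inr ≫ Φ ≫ biprod.fst) ≫
          (-((xMap K 2 3 0 1 (by omega))⟦(1 : ℤ)⟧' ≫ detPs K 3 2 (by norm_num)))
        + (biprod.inr ≫ Φ ≫ biprod.snd) ≫ (yMap K 2 3 0 ≫ detPs K 3 2 (by norm_num)) := by
    rw [split3 biprod.inr Φ]
    rw [show biprod.inl ≫ biprod.desc (-((xMap K 2 3 0 1 (by omega))⟦(1 : ℤ)⟧'))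
          (yMap K 2 3 0) ≫ detPs K 3 2 (by norm_num)
        = -((xMap K 2 3 0 1 (by omega))⟦(1 : ℤ)⟧') ≫ detPs K 3 2 (by norm_num) from by
      simp only [biprod.inl_desc_assoc, Preadditive.neg_comp]]
    rw [show biprod.inr ≫ biprod.desc (-((xMap K 2 3 0 1 (by omega))⟦(1 : ℤ)⟧'))
          (yMap K 2 3 0) ≫ detPs K 3 2 (by norm_num)
        = yMap K 2 3 0 ≫ detPs K 3 2 (by norm_num) from by
      simp only [biprod.inr_desc_assoc]]
  have redR : biprod.inr ≫ biprod.desc (-((xMap K 2 3 0 1 (by omega))⟦(1 : ℤ)⟧'))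
        (yMap K 2 3 0) ≫ A⟦(1 : ℤ)⟧' ≫ detPs K 3 2 (by norm_num)
      = yMap K 2 3 0 ≫ A⟦(1 : ℤ)⟧' ≫ detPs K 3 2 (by norm_num) := by
    simp only [biprod.inr_desc_assoc]
  rw [redL, redR] at key
  have hf := stalk_faithful K _ _ (-1) _ _ (hcorNeg K 2 2 le_rfl) key
  have hf2 := congrArg (fun z => z ≫ eqToHom (stalk_X_self K (QMod K 2) (-1))) hf
  simp only [HomologicalComplex.comp_f, HomologicalComplex.add_f_apply, Category.assoc,
    Preadditive.add_comp] at hf2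
  have hf3 : cmpY K (biprod.inr ≫ Φ ≫ biprod.fst) ≫ (-(mulX K 1 ≫ qmk K 2))
      + cmpNN K (biprod.inr ≫ Φ ≫ biprod.snd) ≫ mulX K 0 ≫ qmk K 2
      = mulX K 0 ≫ cmp00 K A ≫ qmk K 2 := hf2
  rw [← Preadditive.neg_comp] at hf3
  rw [endo_pc K (cmpY K (biprod.inr ≫ Φ ≫ biprod.fst)),
    endo_pc K (cmpNN K (biprod.inr ≫ Φ ≫ biprod.snd)), endo_pc K (cmp00 K A)] at hf3
  simp only [mulX_pc, pc_neg, ← Category.assoc, pc_comp] at hf3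
  rw [← Preadditive.add_comp, pc_add] at hf3
  have hd := qmk_pc_cancel K 2 _ _ hf3
  set gv := val K (cmpY K (biprod.inr ≫ Φ ≫ biprod.fst)) with hgv
  set qv := val K (cmpNN K (biprod.inr ≫ Φ ≫ biprod.snd)) with hqv
  set av := val K (cmp00 K A) with hav
  rw [show (qv - (X : Polynomial K) * gv) - av
      = (-(X : Polynomial K) ^ 1 * gv + (X : Polynomial K) ^ 0 * qv
          - av * (X : Polynomial K) ^ 0) from by ring]
  exact hd

end OctSteps4
/-- Cancellation of one factor of `X` in a divisibility. -/
lemma Xcancel (k : ℕ) (p : Polynomial K)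
    (h : (X : Polynomial K) ^ (k + 1) ∣ (X : Polynomial K) * p) :
    (X : Polynomial K) ^ k ∣ p := by
  obtain ⟨t, ht⟩ := h
  refine ⟨t, ?_⟩
  apply mul_left_cancel₀ (X_ne_zero (R := K))
  rw [ht, pow_succ]
  ring

/-- there is no isomorphism of octahedra between the two good octahedra
on `(f, g) = (x¹₍₃,₃₎, x¹₍₃,₃₎)`: the first with `k, k'` and the second with `k~, k~'`
(all other structure morphisms being equal); that is, there is no family of
isomorphisms `φ_A, ..., φ_F` intertwining all fourteen structure morphisms. -/
theorem octahedra_not_isomorphic :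
    ¬ ∃ (φA φB φC : Pbar K 3 ≅ Pbar K 3) (φD : Dob K ≅ Dob K) (φE : Eob K ≅ Eob K)
        (φF : Dob K ≅ Dob K),
      φA.hom ≫ fO K = fO K ≫ φB.hom ∧
      φB.hom ≫ gO K = gO K ≫ φC.hom ∧
      φA.hom ≫ hO K = hO K ≫ φC.hom ∧
      φB.hom ≫ f'O K = f'O K ≫ φD.hom ∧
      φD.hom ≫ f''O K = f''O K ≫ (shiftFunctor (KbT K) (1 : ℤ)).map φA.hom ∧
      φC.hom ≫ g'O K = g'O K ≫ φF.hom ∧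
      φF.hom ≫ g''O K = g''O K ≫ (shiftFunctor (KbT K) (1 : ℤ)).map φB.hom ∧
      φC.hom ≫ h'O K = h'O K ≫ φE.hom ∧
      φE.hom ≫ h''O K = h''O K ≫ (shiftFunctor (KbT K) (1 : ℤ)).map φA.hom ∧
      φD.hom ≫ ktO K = kO K ≫ φE.hom ∧
      φE.hom ≫ kt'O K = k'O K ≫ φF.hom ∧
      φF.hom ≫ k''O K = k''O K ≫ (shiftFunctor (KbT K) (1 : ℤ)).map φD.hom ∧
      φB.hom ≫ lO K = lO K ≫ φE.hom ∧
      φE.hom ≫ l'O K = l'O K ≫ (shiftFunctor (KbT K) (1 : ℤ)).map φB.hom := by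
  rintro ⟨φA, φB, φC, φD, φE, φF, h1, h2, h3, h4, h5, h6, h7, h8, h9, h10, h11, h12, h13, h14⟩
  obtain ⟨A, hA⟩ := (Q K).map_surjective φA.hom
  obtain ⟨B, hB⟩ := (Q K).map_surjective φB.hom
  obtain ⟨B', hB'⟩ := (Q K).map_surjective φB.inv
  obtain ⟨W, hW⟩ := (Q K).map_surjective φC.hom
  obtain ⟨Ψ, hΨ⟩ := (Q K).map_surjective φD.hom
  obtain ⟨Φ, hΦ⟩ := (Q K).map_surjective φE.hom
  -- the seven detected consequences
  have k1 : (Q K).map A ≫ (Q K).map (xMap K 3 3 1 1 (by omega)) =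
      (Q K).map (xMap K 3 3 1 1 (by omega)) ≫ (Q K).map B := by
    rw [hA, hB]; exact h1
  have d1 := stepX K A B k1
  have k2 : (Q K).map B ≫ (Q K).map (xMap K 3 3 1 1 (by omega)) =
      (Q K).map (xMap K 3 3 1 1 (by omega)) ≫ (Q K).map W := by
    rw [hB, hW]; exact h2
  have d2 := stepX K B W k2
  have k8 : (Q K).map W ≫ (Q K).map (biprod.lift (yMap K 3 2 0) (xMap K 3 2 1 0 (by omega))) =
      (Q K).map (biprod.lift (yMap K 3 2 0) (xMap K 3 2 1 0 (by omega))) ≫ (Q K).map Φ := by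
    rw [hW, hΦ]; exact h8
  have d3 := step8b K W Φ k8
  have k9 : (Q K).map Φ ≫ ((Q K).map (biprod.desc (-((xMap K 2 3 0 1 (by omega))⟦(1 : ℤ)⟧'))
        (yMap K 2 3 0)) ≫ (shIso K 3).hom)
      = ((Q K).map (biprod.desc (-((xMap K 2 3 0 1 (by omega))⟦(1 : ℤ)⟧'))
        (yMap K 2 3 0)) ≫ (shIso K 3).hom) ≫
          (shiftFunctor (KbT K) (1 : ℤ)).map ((Q K).map A) := by
    rw [hΦ, hA]; exact h9
  have d4 := step9b K A Φ k9
  have k10 : (Q K).map Ψ ≫ (Q K).map (biprod.desc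
        (biprod.lift ((xMap K 1 2 0 1 (by omega))⟦(1 : ℤ)⟧') 0)
        (biprod.lift (yMap K 1 2 0) (xMap K 1 2 0 1 (by omega)))) =
      (Q K).map (biprod.map ((xMap K 1 2 0 1 (by omega))⟦(1 : ℤ)⟧')
        (xMap K 1 2 0 1 (by omega))) ≫ (Q K).map Φ := by
    rw [hΨ, hΦ]; exact h10
  have d5 := step10 K Ψ Φ k10
  have k4 : (Q K).map B ≫ (Q K).map (biprod.lift (yMap K 3 1 0) (xMap K 3 1 2 0 (by omega))) =
      (Q K).map (biprod.lift (yMap K 3 1 0) (xMap K 3 1 2 0 (by omega))) ≫ (Q K).map Ψ := by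
    rw [hB, hΨ]; exact h4
  have d6 := step4 K B Ψ k4
  have kInv : (Q K).map (B ≫ B') = (Q K).map (𝟙 (P K 3)) := by
    rw [Functor.map_comp, hB, hB', Iso.hom_inv_id, CategoryTheory.Functor.map_id]
  have d7 := stepInv K B B' kInv
  have cΦ : val K (cmpNN K (biprod.inr ≫ Φ ≫ biprod.snd))
      = val K (cmp00 K (biprod.inr ≫ Φ ≫ biprod.snd)) := cmp_comm K _
  have cΨ : val K (cmpNN K (biprod.inr ≫ Ψ ≫ biprod.snd))
      = val K (cmp00 K (biprod.inr ≫ Ψ ≫ biprod.snd)) := cmp_comm K _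
  rw [cΦ] at d4
  rw [cΨ] at d5
  -- name the scalars
  set a := val K (cmp00 K A) with ha
  set b := val K (cmp00 K B) with hb
  set b' := val K (cmp00 K B') with hb'
  set w := val K (cmp00 K W) with hw
  set q := val K (cmp00 K (biprod.inr ≫ Φ ≫ biprod.snd)) with hq
  set γ := val K (cmpY K (biprod.inr ≫ Φ ≫ biprod.fst)) with hγ
  set v := val K (cmp00 K (biprod.inr ≫ Ψ ≫ biprod.snd)) with hv
  -- algebra
  have daw : (X : Polynomial K) ^ 2 ∣ a - w := by
    apply Xcancel K 2
    have : (X : Polynomial K) * (a - w) = (X * a - X * b) + (X * b - X * w) := by ring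
    rw [show (2 : ℕ) + 1 = 3 from rfl, this]
    exact dvd_add d1 d2
  have dγ : (X : Polynomial K) ∣ γ := by
    have h2 : (X : Polynomial K) ^ (1 + 1) ∣ (X : Polynomial K) * γ := by
      have hx : (X : Polynomial K) * γ = -((w - q) + ((q - X * γ) - a) + (a - w)) := by ring
      rw [show (1 : ℕ) + 1 = 2 from rfl, hx]
      exact dvd_neg.mpr (dvd_add (dvd_add d3 d4) daw)
    simpa [pow_one] using Xcancel K 1 γ h2
  have dv : (X : Polynomial K) ∣ v := by
    have : v = (v - γ) + γ := by ring
    rw [this]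
    exact dvd_add d5 dγ
  have db : (X : Polynomial K) ∣ b := by
    have : b = (b - v) + v := by ring
    rw [this]
    exact dvd_add d6 dv
  have done1 : (X : Polynomial K) ∣ 1 := by
    have : (1 : Polynomial K) = b' * b - (b' * b - 1) := by ring
    rw [this]
    exact dvd_sub (Dvd.dvd.mul_left db b') d7
  have h0 : (1 : Polynomial K).coeff 0 = 0 := Polynomial.X_dvd_iff.mp done1
  simp at h0
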